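/- Let γ : G → G' be a contraction of graphs and (P,s) a spin structure on G. Set P' = γ_*P and define s' : V(G'/P') → ℤ/2ℤ by s'(v') = Σ_{v ∈ γ̄⁻¹(v')} s(v), where γ̄ : G/P → G'/P' is the induced contraction. Then (P',s') is a spin structure on G' (in particular s' vanishes on every weight-0 vertex of G'/P'), and (P',s') has the same parity as (P,s). -/

import Mathlib

/-!
Common combinatorial preliminaries: weighted graphs with legs, contractions,
spin structures, following Caporaso–Melo–Pacini, "Tropicalizing the moduli
space of spin curves".
-/

attribute [local instance] Classical.propDecidable

noncomputable section

/-- A weighted graph with legs.  Edges are recorded as elements of a finite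
type `E` together with their (unordered) pair of endpoints `ends e : Sym2 V`
(a loop corresponds to a diagonal pair); legs are elements of a finite type
`Lg` with an endpoint map `legEnd`; `w` is the weight function. -/
structure LGraph : Type 1 where
  V : Type
  E : Type
  Lg : Type
  fV : Fintype V
  fE : Fintype E
  fL : Fintype Lg
  dV : DecidableEq V
  dE : DecidableEq E
  dL : DecidableEq Lg
  neV : Nonempty V
  ends : E → Sym2 V
  legEnd : Lg → V
  w : V → ℕ

attribute [instance] LGraph.fV LGraph.fE LGraph.fL LGraph.dV LGraph.dE LGraph.dL LGraph.neV

namespace LGraph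

variable (G : LGraph)

/-- The multiplicity of the vertex `v` in the edge `e` (`2` for a loop at `v`). -/
def degMul (v : G.V) (e : G.E) : ℕ :=
  Sym2.lift ⟨fun a b => (if a = v then 1 else 0) + (if b = v then 1 else 0),
    fun _ _ => add_comm _ _⟩ (G.ends e)

/-- The degree of a vertex: number of non-leg half-edges ending at it. -/
def deg (v : G.V) : ℕ := ∑ e, G.degMul v e

/-- The number of legs ending at a vertex. -/
def legsAt (v : G.V) : ℕ := (Finset.univ.filter fun l => G.legEnd l = v).card

/-- The number of loops based at a vertex. -/
def loops (v : G.V) : ℕ := (Finset.univ.filter fun e => G.ends e = Sym2.diag v).card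

/-- The boundary map `∂ : E_G → V_G` over `F₂`, sending an edge to the sum of
its two endpoints. -/
def boundary : (G.E → ZMod 2) →ₗ[ZMod 2] (G.V → ZMod 2) where
  toFun x := fun v => ∑ e, x e * (G.degMul v e : ZMod 2)
  map_add' x y := by
    funext v
    simp [add_mul, Finset.sum_add_distrib]
  map_smul' c x := by
    funext v
    simp [Finset.mul_sum, mul_assoc]

/-- The `F₂`-indicator vector of a set of edges. -/
def indicator (P : Finset G.E) : G.E → ZMod 2 := fun e => if e ∈ P then 1 else 0

/-- A subset of edges is cyclic if it lies in the cycle space `C_G = ker ∂`,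
i.e. its indicator vector is killed by the boundary map. -/
def IsCyclic (P : Finset G.E) : Prop := G.boundary (G.indicator P) = 0

/-- Adjacency through an edge belonging to `P`. -/
def PAdj (P : Finset G.E) (u v : G.V) : Prop :=
  ∃ e ∈ P, u ∈ G.ends e ∧ v ∈ G.ends e

/-- The vertex set of the contraction `G/P`: connected components of `(V, P)`. -/
def CompV (P : Finset G.E) : Type := Quot (G.PAdj P)

instance (P : Finset G.E) : Finite (G.CompV P) := Quot.finite _
instance (P : Finset G.E) : Fintype (G.CompV P) := Fintype.ofFinite _
instance (P : Finset G.E) : Nonempty (G.CompV P) := G.neV.map (Quot.mk _)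

/-- The set of vertices of `G` lying in a given component. -/
def fiberV (P : Finset G.E) (x : G.CompV P) : Finset G.V :=
  Finset.univ.filter fun v => Quot.mk (G.PAdj P) v = x

/-- The set of edges of `P` lying in a given component. -/
def fiberE (P : Finset G.E) (x : G.CompV P) : Finset G.E :=
  P.filter fun e => ∀ v ∈ G.ends e, Quot.mk (G.PAdj P) v = x

/-- The weight of a vertex `x` of `G/P`: the genus of its preimage, i.e. the
sum of the weights of the vertices in the component plus its first Betti
number `#edges - #vertices + 1`. -/
def quotWeight (P : Finset G.E) (x : G.CompV P) : ℕ :=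
  (∑ v ∈ G.fiberV P x, G.w v) + ((G.fiberE P x).card + 1 - (G.fiberV P x).card)

/-- Connectedness of the graph. -/
def Connected : Prop := ∀ u v : G.V, Relation.EqvGen (G.PAdj Finset.univ) u v

/-- The number of connected components `c(G)`. -/
def numComp : ℕ := Nat.card (G.CompV Finset.univ)

/-- The first Betti number `b₁(G) = |E| - |V| + c(G)`. -/
def b1 : ℕ := Fintype.card G.E + G.numComp - Fintype.card G.V

/-- The genus `g(G) = Σ_v w(v) + b₁(G)`. -/
def genus : ℕ := (∑ v, G.w v) + G.b1

/-- The number of legs. -/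
def numLegs : ℕ := Fintype.card G.Lg

/-- Stability: connected and `2w(v) - 2 + deg(v) + ℓ(v) > 0` at every vertex. -/
def Stable : Prop :=
  G.Connected ∧ ∀ v : G.V, 2 < 2 * G.w v + G.deg v + G.legsAt v

/-- `G` is Eulerian (cyclic) if every vertex has even degree, i.e. the set of
all edges lies in the cycle space. -/
def Eulerian : Prop := G.IsCyclic Finset.univ

/-- A basic graph: a stable cyclic (Eulerian) graph of genus `≥ 2` with at
least one edge, all weights `≤ 1`, and `w(v) + deg(v) + ℓ(v) ≤ 4` at every
vertex with equality only if there is a loop at `v`. -/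
def IsBasic : Prop :=
  G.Stable ∧ 2 ≤ G.genus ∧ Nonempty G.E ∧ G.Eulerian ∧
  (∀ v, G.w v ≤ 1) ∧
  (∀ v, G.w v + G.deg v + G.legsAt v ≤ 4) ∧
  (∀ v, G.w v + G.deg v + G.legsAt v = 4 → 1 ≤ G.loops v)

/-- `c⁺`: the number of vertices of `G/P` of positive weight, i.e. the number
of connected components of `P̄` of positive genus. -/
def cPlus (P : Finset G.E) : ℕ :=
  (Finset.univ.filter fun x : G.CompV P => 0 < G.quotWeight P x).card

/-- The contracted graph `G/P`. -/
def contract (P : Finset G.E) : LGraph where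
  V := G.CompV P
  E := {e : G.E // e ∉ P}
  Lg := G.Lg
  fV := inferInstance
  fE := inferInstance
  fL := G.fL
  dV := Classical.decEq _
  dE := inferInstance
  dL := G.dL
  neV := inferInstance
  ends := fun e => (G.ends e.1).map (Quot.mk (G.PAdj P))
  legEnd := fun l => Quot.mk (G.PAdj P) (G.legEnd l)
  w := G.quotWeight P

/-- An ordered pair of endpoints of an edge. -/
def endPair (e : G.E) : G.V × G.V := Classical.choose (Quot.exists_rep (G.ends e))

end LGraph

/-- A spin structure on a graph `G`: a cyclic subset `P` of edges and a sign
function on the vertices of `G/P` vanishing at all vertices of weight `0`. -/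
structure SpinStructure (G : LGraph) where
  P : Finset G.E
  cyclic : G.IsCyclic P
  s : G.CompV P → ZMod 2
  vanish : ∀ x, G.quotWeight P x = 0 → s x = 0

/-- The parity of a spin structure: the parity of `Σ_{v ∈ V(G/P)} s(v)`. -/
def SpinStructure.parity {G : LGraph} (σ : SpinStructure G) : ZMod 2 := ∑ x, σ.s x

/-- A contraction of graphs `γ : G → G' = G/F`: the edges of `G'` are
identified with `E(G) ∖ F`, the legs of `G'` with those of `G`; the vertex
map is surjective, its fibers are exactly the connected components of
`(V(G), F)`, endpoints and legs are compatible, and the weight of a vertex of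
`G'` is the genus of its preimage. -/
structure Contraction (G G' : LGraph) where
  F : Finset G.E
  vMap : G.V → G'.V
  eEquiv : G'.E ≃ {e : G.E // e ∉ F}
  lEquiv : G'.Lg ≃ G.Lg
  vSurj : Function.Surjective vMap
  ends_compat : ∀ e' : G'.E, G'.ends e' = (G.ends (eEquiv e').1).map vMap
  leg_compat : ∀ l' : G'.Lg, G'.legEnd l' = vMap (G.legEnd (lEquiv l'))
  collapse : ∀ e ∈ F, ∀ u ∈ G.ends e, ∀ v ∈ G.ends e, vMap u = vMap v
  fiber_conn : ∀ u v : G.V, vMap u = vMap v → Relation.EqvGen (G.PAdj F) u v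
  w_compat : ∀ v' : G'.V,
    G'.w v' = (∑ v ∈ Finset.univ.filter (fun v => vMap v = v'), G.w v)
      + (((F.filter fun e => ∀ u ∈ G.ends e, vMap u = v').card + 1)
          - (Finset.univ.filter fun v => vMap v = v').card)

namespace Contraction

variable {G G' : LGraph} (γ : Contraction G G')

/-- The induced map `γ^E_* : E_G → E_{G'}` (γ^E_*(e) = e if e ∉ F, 0 else). -/
def eStar : (G.E → ZMod 2) →ₗ[ZMod 2] (G'.E → ZMod 2) where
  toFun x := fun e' => x (γ.eEquiv e').1
  map_add' _ _ := rfl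
  map_smul' _ _ := rfl

/-- The induced map `γ^V_* : V_G → V_{G'}`. -/
def vStar : (G.V → ZMod 2) →ₗ[ZMod 2] (G'.V → ZMod 2) where
  toFun x := fun v' => ∑ v ∈ Finset.univ.filter (fun v => γ.vMap v = v'), x v
  map_add' x y := by
    funext v'
    simp [Finset.sum_add_distrib]
  map_smul' c x := by
    funext v'
    simp [Finset.mul_sum]

/-- The pushforward `γ_* P = P ∖ F` of a set of edges, as a subset of `E(G')`. -/
def pushE (P : Finset G.E) : Finset G'.E :=
  Finset.univ.filter fun e' => (γ.eEquiv e' : {e : G.E // e ∉ γ.F}).1 ∈ P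

/-- The graph of the induced map `γ̄ : V(G/P) → V(G'/P')` on components. -/
def compMapsTo (P : Finset G.E) (P' : Finset G'.E)
    (x : G.CompV P) (x' : G'.CompV P') : Prop :=
  ∃ v : G.V, Quot.mk (G.PAdj P) v = x ∧ Quot.mk (G'.PAdj P') (γ.vMap v) = x'

/-- The pushforward sign function: `s'(v') = Σ_{v ∈ γ̄⁻¹(v')} s(v)`. -/
def pushS (P : Finset G.E) (s : G.CompV P → ZMod 2) :
    G'.CompV (γ.pushE P) → ZMod 2 :=
  fun x' => ∑ x ∈ Finset.univ.filter
    (fun x => γ.compMapsTo P (γ.pushE P) x x'), s x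

/-- `γ_* σ = σ'` for spin structures. -/
def SpinMapsTo (σ : SpinStructure G) (σ' : SpinStructure G') : Prop :=
  σ'.P = γ.pushE σ.P ∧ HEq σ'.s (γ.pushS σ.P σ.s)

end Contraction

/-- An automorphism of a graph: weight-preserving bijection on vertices,
bijection on edges compatible with endpoints, fixing every leg. -/
structure GraphAut (G : LGraph) where
  vE : G.V ≃ G.V
  eE : G.E ≃ G.E
  ends_compat : ∀ e, G.ends (eE e) = (G.ends e).map vE
  w_compat : ∀ v, G.w (vE v) = G.w v
  leg_fix : ∀ l, G.legEnd l = vE (G.legEnd l)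

namespace GraphAut

variable {G : LGraph}

/-- Composition of automorphisms (`α.comp β` acts by `β` first, then `α`). -/
def comp (α β : GraphAut G) : GraphAut G where
  vE := β.vE.trans α.vE
  eE := β.eE.trans α.eE
  ends_compat e := by
    simp only [Equiv.trans_apply, Equiv.coe_trans]
    rw [α.ends_compat, β.ends_compat, Sym2.map_map]
  w_compat v := by
    simp only [Equiv.trans_apply]
    rw [α.w_compat, β.w_compat]
  leg_fix l := by
    simp only [Equiv.trans_apply]
    rw [← β.leg_fix, ← α.leg_fix]

/-- `α_* σ = σ'` for an automorphism `α` and spin structures `σ, σ'`. -/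
def SpinMapsTo (α : GraphAut G) (σ σ' : SpinStructure G) : Prop :=
  σ'.P = σ.P.image α.eE ∧
  ∀ v : G.V, σ'.s (Quot.mk (G.PAdj σ'.P) (α.vE v)) = σ.s (Quot.mk (G.PAdj σ.P) v)

/-- `α` preserves the spin structure `σ`, i.e. `α_*(P,s) = (P,s)`. -/
def PreservesSpin (α : GraphAut G) (σ : SpinStructure G) : Prop :=
  α.SpinMapsTo σ σ

end GraphAut

/-- The graph `P̄ = G - R°` where `R = E ∖ P`: same vertices, edges `P`, and
the legs of `G` together with a pair of new legs for each edge of `R`, placed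
at its two endpoints. -/
def LGraph.legify (G : LGraph) (P : Finset G.E) : LGraph where
  V := G.V
  E := {e : G.E // e ∈ P}
  Lg := G.Lg ⊕ ({e : G.E // e ∉ P} × Bool)
  fV := G.fV
  fE := inferInstance
  fL := inferInstance
  dV := G.dV
  dE := inferInstance
  dL := inferInstance
  neV := G.neV
  ends := fun e => G.ends e.1
  legEnd := fun l =>
    match l with
    | Sum.inl l => G.legEnd l
    | Sum.inr (e, b) => if b then (G.endPair e.1).1 else (G.endPair e.1).2
  w := G.w

/-- `G` is a stable graph of genus `g` with `n` legs. -/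
def StG (g n : ℕ) (G : LGraph) : Prop := G.Stable ∧ G.genus = g ∧ G.numLegs = n

/-- Objects of the poset `C_{g,n}` before taking isomorphism classes. -/
def CycObj : Type 1 := Σ G : LGraph, Finset G.E

/-- Objects of the poset `SP_{g,n}` before taking isomorphism classes. -/
def SpinObj : Type 1 := Σ G : LGraph, SpinStructure G

/-- Order on graphs: `G ≥ G'` iff there is a contraction `G → G'`. -/
def GraphGe (G G' : LGraph) : Prop := Nonempty (Contraction G G')

/-- Order on `C_{g,n}`: `(G,P) ≥ (G',P')` iff some contraction pushes `P` to `P'`. -/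
def CycGe (a b : CycObj) : Prop := ∃ γ : Contraction a.1 b.1, γ.pushE a.2 = b.2

/-- Order on `SP_{g,n}`: `(G,P,s) ≥ (G',P',s')` iff some contraction pushes
`(P,s)` to `(P',s')`. -/
def SpinGe (a b : SpinObj) : Prop := ∃ γ : Contraction a.1 b.1, γ.SpinMapsTo a.2 b.2

/-- `q : X → Y` is a quotient of posets (for the `≥`-relations `geA`, `geB`):
it is surjective, order-preserving, and any relation downstairs lifts. -/
def IsPosetQuotient {α : Sort*} {β : Sort*}
    (geA : α → α → Prop) (geB : β → β → Prop) (q : α → β) : Prop :=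
  Function.Surjective q ∧
  (∀ a a', geA a a' → geB (q a) (q a')) ∧
  (∀ b b', geB b b' → ∃ a a', q a = b ∧ q a' = b' ∧ geA a a')

/-- Strict order `x > y` associated to a `≥`-relation. -/
def StrictGt {α : Sort*} (ge : α → α → Prop) (x y : α) : Prop := ge x y ∧ ¬ ge y x

/-- `x` covers `y`. -/
def Covers {α : Sort*} (ge : α → α → Prop) (x y : α) : Prop :=
  StrictGt ge x y ∧ ¬ ∃ z, StrictGt ge x z ∧ StrictGt ge z y

/-- `ρ` is a rank function for the `≥`-relation `ge`. -/
def IsRankFn {α : Sort*} (ge : α → α → Prop) (ρ : α → ℕ) : Prop :=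
  (∀ x y, StrictGt ge x y → ρ y < ρ x) ∧
  (∀ x y, Covers ge x y → ρ x = ρ y + 1)



/-! ### Auxiliary lemmas -/

namespace LGraph

variable (G : LGraph)

lemma padj_mono {S T : Finset G.E} (h : S ⊆ T) {u v : G.V} (h2 : G.PAdj S u v) :
    G.PAdj T u v := by
  obtain ⟨e, he, hu, hv⟩ := h2
  exact ⟨e, h he, hu, hv⟩

lemma ends_eq_pair_exists (e : G.E) : ∃ a b : G.V, G.ends e = s(a, b) := by
  induction G.ends e using Sym2.ind with
  | _ a b => exact ⟨a, b, rfl⟩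

/-- Vertices outside a set `U` containing all endpoints of edges of `S` are isolated. -/
lemma eqvGen_out {S : Finset G.E} {U : Finset G.V}
    (hS : ∀ e ∈ S, ∀ u ∈ G.ends e, u ∈ U) {a b : G.V}
    (h : Relation.EqvGen (G.PAdj S) a b) : (a ∉ U → a = b) ∧ (b ∉ U → a = b) := by
  induction h with
  | rel x y hxy =>
      obtain ⟨e, he, hx, hy⟩ := hxy
      exact ⟨fun hxU => absurd (hS e he x hx) hxU, fun hyU => absurd (hS e he y hy) hyU⟩
  | refl x => exact ⟨fun _ => rfl, fun _ => rfl⟩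
  | symm x y _ ih => exact ⟨fun h1 => (ih.2 h1).symm, fun h2 => (ih.1 h2).symm⟩
  | trans x y z _ _ ih1 ih2 =>
      constructor
      · intro hx
        have h1 := ih1.1 hx
        exact h1.trans (ih2.1 (h1 ▸ hx))
      · intro hz
        have h2 := (ih2.2 hz)
        exact (ih1.2 (h2 ▸ hz)).trans h2

lemma eqvGen_insert {S : Finset G.E} {e : G.E} {a b : G.V}
    (hab : G.ends e = s(a, b)) {u v : G.V}
    (h : Relation.EqvGen (G.PAdj (insert e S)) u v) :
    Relation.EqvGen (G.PAdj S) u v ∨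
      ((Relation.EqvGen (G.PAdj S) u a ∨ Relation.EqvGen (G.PAdj S) u b) ∧
       (Relation.EqvGen (G.PAdj S) v a ∨ Relation.EqvGen (G.PAdj S) v b)) := by
  induction h with
  | rel x y hxy =>
      obtain ⟨e', he', hx, hy⟩ := hxy
      rcases Finset.mem_insert.1 he' with he' | he'
      · subst he'
        rw [hab, Sym2.mem_iff] at hx hy
        refine Or.inr ⟨?_, ?_⟩
        · rcases hx with h | h <;> [exact Or.inl (h ▸ Relation.EqvGen.refl x);
            exact Or.inr (h ▸ Relation.EqvGen.refl x)]
        · rcases hy with h | h <;> [exact Or.inl (h ▸ Relation.EqvGen.refl y);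
            exact Or.inr (h ▸ Relation.EqvGen.refl y)]
      · exact Or.inl (Relation.EqvGen.rel _ _ ⟨e', he', hx, hy⟩)
  | refl x => exact Or.inl (Relation.EqvGen.refl x)
  | symm x y _ ih =>
      rcases ih with h | ⟨h1, h2⟩
      · exact Or.inl h.symm
      · exact Or.inr ⟨h2, h1⟩
  | trans x y z _ _ ih1 ih2 =>
      rcases ih1 with h1 | ⟨hx, hy⟩
      · rcases ih2 with h2 | ⟨hy', hz⟩
        · exact Or.inl (h1.trans _ _ _ h2)
        · refine Or.inr ⟨?_, hz⟩
          rcases hy' with h | h <;> [exact Or.inl (h1.trans _ _ _ h);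
            exact Or.inr (h1.trans _ _ _ h)]
      · rcases ih2 with h2 | ⟨hy', hz⟩
        · refine Or.inr ⟨hx, ?_⟩
          rcases hy with h | h <;> [exact Or.inl ((h2.symm _ _).trans _ _ _ h);
            exact Or.inr ((h2.symm _ _).trans _ _ _ h)]
        · exact Or.inr ⟨hx, hz⟩

/-- Adding one edge decreases the number of components by at most one. -/
lemma card_comp_insert_le (S : Finset G.E) (e : G.E) :
    Fintype.card (G.CompV S) ≤ Fintype.card (G.CompV (insert e S)) + 1 := by
  obtain ⟨a, b, hab⟩ := G.ends_eq_pair_exists e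
  set q : G.CompV S → G.CompV (insert e S) :=
    Quot.lift (Quot.mk _) (fun u v h =>
      Quot.sound (G.padj_mono (Finset.subset_insert e S) h)) with hq
  have hinj : Function.Injective (fun x : G.CompV S =>
      if x = Quot.mk (G.PAdj S) b then (none : Option (G.CompV (insert e S)))
      else some (q x)) := by
    intro x y hxy
    dsimp only at hxy
    by_cases hx : x = Quot.mk (G.PAdj S) b
    · by_cases hy : y = Quot.mk (G.PAdj S) b
      · exact hx.trans hy.symm
      · rw [if_pos hx, if_neg hy] at hxy; exact absurd hxy (by simp)
    · by_cases hy : y = Quot.mk (G.PAdj S) b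
      · rw [if_neg hx, if_pos hy] at hxy; exact absurd hxy (by simp)
      · rw [if_neg hx, if_neg hy, Option.some.injEq] at hxy
        obtain ⟨u, rfl⟩ := Quot.exists_rep x
        obtain ⟨v, rfl⟩ := Quot.exists_rep y
        have h2 : Relation.EqvGen (G.PAdj (insert e S)) u v := Quot.eq.1 hxy
        rcases G.eqvGen_insert hab h2 with h | ⟨hu, hv⟩
        · exact Quot.eqvGen_sound h
        · have hu' : Relation.EqvGen (G.PAdj S) u a := by
            rcases hu with h | h
            · exact h
            · exact absurd (Quot.eqvGen_sound h) hx
          have hv' : Relation.EqvGen (G.PAdj S) v a := by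
            rcases hv with h | h
            · exact h
            · exact absurd (Quot.eqvGen_sound h) hy
          exact Quot.eqvGen_sound (hu'.trans _ _ _ (hv'.symm _ _))
  calc Fintype.card (G.CompV S) ≤ Fintype.card (Option (G.CompV (insert e S))) :=
        Fintype.card_le_of_injective _ hinj
    _ = Fintype.card (G.CompV (insert e S)) + 1 := Fintype.card_option

/-- Monotone component counting: `c(S) + |S| ≤ c(T) + |T|` for `S ⊆ T`. -/
lemma card_comp_add_card_mono : ∀ (k : ℕ) (S T : Finset G.E), S ⊆ T → (T \ S).card = k →
    Fintype.card (G.CompV S) + S.card ≤ Fintype.card (G.CompV T) + T.card := by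
  intro k
  induction k with
  | zero =>
      intro S T hST hcard
      have : S = T := Finset.Subset.antisymm hST
        (Finset.sdiff_eq_empty_iff_subset.1 (Finset.card_eq_zero.1 hcard))
      subst this
      exact le_rfl
  | succ k ih =>
      intro S T hST hcard
      have hne : (T \ S).Nonempty := Finset.card_pos.1 (by omega)
      obtain ⟨e, he⟩ := hne
      have heT : e ∈ T := (Finset.mem_sdiff.1 he).1
      have heS : e ∉ S := (Finset.mem_sdiff.1 he).2
      have h1 := G.card_comp_insert_le S e
      have h2 : (T \ insert e S).card = k := by
        rw [Finset.sdiff_insert, Finset.card_erase_of_mem he]; omega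
      have h3 := ih (insert e S) T (Finset.insert_subset heT hST) h2
      rw [Finset.card_insert_of_notMem heS] at h3
      omega

end LGraph


namespace LGraph

lemma ends_eq_endPair (G : LGraph) (e : G.E) :
    G.ends e = s((G.endPair e).1, (G.endPair e).2) :=
  (Classical.choose_spec (Quot.exists_rep (G.ends e))).symm

lemma endPair_fst_mem (G : LGraph) (e : G.E) : (G.endPair e).1 ∈ G.ends e := by
  rw [G.ends_eq_endPair e]; exact Sym2.mem_mk_left _ _

end LGraph

namespace Contraction

variable {G G' : LGraph} (γ : Contraction G G') (P : Finset G.E)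

lemma mem_pushE {e' : G'.E} : e' ∈ γ.pushE P ↔ ((γ.eEquiv e' : {e : G.E // e ∉ γ.F}) : G.E) ∈ P := by
  simp [pushE]

lemma vmap_eq_of_eqvGenF {u v : G.V} (h : Relation.EqvGen (G.PAdj γ.F) u v) :
    γ.vMap u = γ.vMap v := by
  induction h with
  | rel x y hxy =>
      obtain ⟨e, he, hx, hy⟩ := hxy
      exact γ.collapse e he x hx y hy
  | refl x => rfl
  | symm x y _ ih => exact ih.symm
  | trans x y z _ _ ih1 ih2 => exact ih1.trans ih2

lemma quot_push_eq_of_padj {u v : G.V} (h : G.PAdj P u v) :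
    Quot.mk (G'.PAdj (γ.pushE P)) (γ.vMap u) = Quot.mk (G'.PAdj (γ.pushE P)) (γ.vMap v) := by
  obtain ⟨e, heP, hu, hv⟩ := h
  by_cases hF : e ∈ γ.F
  · rw [γ.collapse e hF u hu v hv]
  · apply Quot.sound
    refine ⟨γ.eEquiv.symm ⟨e, hF⟩, ?_, ?_, ?_⟩
    · rw [γ.mem_pushE]; simpa using heP
    · rw [γ.ends_compat]
      simp only [Equiv.apply_symm_apply]
      exact Sym2.mem_map.2 ⟨u, hu, rfl⟩
    · rw [γ.ends_compat]
      simp only [Equiv.apply_symm_apply]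
      exact Sym2.mem_map.2 ⟨v, hv, rfl⟩

/-- The induced map `γ̄ : V(G/P) → V(G'/P')` on components. -/
def phi : G.CompV P → G'.CompV (γ.pushE P) :=
  Quot.lift (fun v => Quot.mk (G'.PAdj (γ.pushE P)) (γ.vMap v))
    (fun _ _ h => γ.quot_push_eq_of_padj P h)

lemma phi_mk (v : G.V) :
    γ.phi P (Quot.mk (G.PAdj P) v) = Quot.mk (G'.PAdj (γ.pushE P)) (γ.vMap v) := rfl

lemma compMapsTo_iff (x : G.CompV P) (x' : G'.CompV (γ.pushE P)) :
    γ.compMapsTo P (γ.pushE P) x x' ↔ γ.phi P x = x' := by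
  constructor
  · rintro ⟨v, rfl, rfl⟩; rfl
  · rintro rfl
    obtain ⟨v, rfl⟩ := Quot.exists_rep x
    exact ⟨v, rfl, rfl⟩

lemma sum_pushS (s : G.CompV P → ZMod 2) :
    ∑ x' : G'.CompV (γ.pushE P), γ.pushS P s x' = ∑ x : G.CompV P, s x := by
  unfold pushS
  calc ∑ x', ∑ x ∈ Finset.univ.filter (fun x => γ.compMapsTo P (γ.pushE P) x x'), s x
      = ∑ x', ∑ x ∈ Finset.univ.filter (fun x => γ.phi P x = x'), s x := by
        refine Finset.sum_congr rfl fun x' _ => Finset.sum_congr ?_ fun _ _ => rfl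
        apply Finset.filter_congr
        intro x _
        rw [γ.compMapsTo_iff]
    _ = ∑ x, s x := Finset.sum_fiberwise _ _ _

lemma sum_degMul_fiber (e : G.E) (v' : G'.V) :
    ∑ v ∈ Finset.univ.filter (fun v => γ.vMap v = v'), G.degMul v e =
      Sym2.lift ⟨fun a b => (if a = v' then 1 else 0) + (if b = v' then 1 else 0),
        fun _ _ => add_comm _ _⟩ ((G.ends e).map γ.vMap) := by
  obtain ⟨a, b, hab⟩ := G.ends_eq_pair_exists e
  rw [hab, Sym2.map_pair_eq, Sym2.lift_mk]
  simp only [LGraph.degMul, hab, Sym2.lift_mk]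
  rw [Finset.sum_add_distrib, Finset.sum_ite_eq, Finset.sum_ite_eq]
  simp

/-- Cyclicity is preserved by pushforward. -/
lemma isCyclic_pushE (hP : G.IsCyclic P) : G'.IsCyclic (γ.pushE P) := by
  unfold LGraph.IsCyclic at hP ⊢
  funext v'
  have h0 : ∑ v ∈ Finset.univ.filter (fun v => γ.vMap v = v'),
      (G.boundary (G.indicator P)) v = 0 := by
    rw [hP]; simp
  unfold LGraph.boundary at h0
  simp only [LinearMap.coe_mk, AddHom.coe_mk] at h0
  rw [Finset.sum_comm] at h0
  have h1 : ∀ e : G.E, ∑ v ∈ Finset.univ.filter (fun v => γ.vMap v = v'),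
      G.indicator P e * ((G.degMul v e : ℕ) : ZMod 2) =
      G.indicator P e * ((Sym2.lift ⟨fun a b => (if a = v' then 1 else 0) + (if b = v' then 1 else 0),
        fun _ _ => add_comm _ _⟩ ((G.ends e).map γ.vMap) : ℕ) : ZMod 2) := by
    intro e
    rw [← Finset.mul_sum, ← Nat.cast_sum, γ.sum_degMul_fiber e v']
  rw [Finset.sum_congr rfl (fun e _ => h1 e)] at h0
  -- split off the F-part, which vanishes
  rw [← Finset.sum_filter_add_sum_filter_not Finset.univ (fun e => e ∈ γ.F)] at h0
  have hFzero : ∑ e ∈ Finset.univ.filter (fun e => e ∈ γ.F),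
      G.indicator P e * ((Sym2.lift ⟨fun a b => (if a = v' then 1 else 0) + (if b = v' then 1 else 0),
        fun _ _ => add_comm _ _⟩ ((G.ends e).map γ.vMap) : ℕ) : ZMod 2) = 0 := by
    apply Finset.sum_eq_zero
    intro e he
    have heF : e ∈ γ.F := by simpa using he
    obtain ⟨a, b, hab⟩ := G.ends_eq_pair_exists e
    have hcol : γ.vMap a = γ.vMap b :=
      γ.collapse e heF a (by rw [hab]; exact Sym2.mem_mk_left a b)
        b (by rw [hab]; exact Sym2.mem_mk_right a b)
    rw [hab, Sym2.map_pair_eq, Sym2.lift_mk, hcol]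
    show G.indicator P e *
      (((if γ.vMap b = v' then 1 else 0) + (if γ.vMap b = v' then 1 else 0) : ℕ) : ZMod 2) = 0
    by_cases hb : γ.vMap b = v'
    · simp only [if_pos hb]
      have h2 : (((1 : ℕ) + 1 : ℕ) : ZMod 2) = 0 := by decide
      rw [h2, mul_zero]
    · simp only [if_neg hb]
      norm_num
  rw [hFzero, zero_add] at h0
  rw [Finset.sum_subtype (p := fun e : G.E => e ∉ γ.F)
    (Finset.univ.filter (fun e => ¬ e ∈ γ.F)) (by simp)
    (fun e => G.indicator P e *
      ((Sym2.lift ⟨fun a b => (if a = v' then 1 else 0) + (if b = v' then 1 else 0),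
        fun _ _ => add_comm _ _⟩ ((G.ends e).map γ.vMap) : ℕ) : ZMod 2))] at h0
  simp only [Pi.zero_apply]
  unfold LGraph.boundary
  simp only [LinearMap.coe_mk, AddHom.coe_mk]
  -- reindex the sum over `G'.E` by the subtype `{e // e ∉ F}`
  rw [← Equiv.sum_comp γ.eEquiv.symm
    (fun e' => G'.indicator (γ.pushE P) e' * ((G'.degMul v' e' : ℕ) : ZMod 2)), ← h0]
  apply Finset.sum_congr rfl
  intro p _
  have hind : G'.indicator (γ.pushE P) (γ.eEquiv.symm p) = G.indicator P p.1 := by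
    unfold LGraph.indicator
    simp only [γ.mem_pushE, Equiv.apply_symm_apply]
  have hdeg : G'.degMul v' (γ.eEquiv.symm p) =
      Sym2.lift ⟨fun a b => (if a = v' then 1 else 0) + (if b = v' then 1 else 0),
        fun _ _ => add_comm _ _⟩ ((G.ends p.1).map γ.vMap) := by
    unfold LGraph.degMul
    rw [γ.ends_compat]
    simp
  rw [hind, hdeg]

end Contraction


namespace Contraction

variable {G G' : LGraph} (γ : Contraction G G') (P : Finset G.E)

/-- If a vertex of `G'/P'` has weight `0`, every component of `(V(G), P)` lying over it
has genus `0`. -/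
lemma quotWeight_eq_zero_of_push {x : G.CompV P} {x' : G'.CompV (γ.pushE P)}
    (hφ : γ.phi P x = x') (h0 : G'.quotWeight (γ.pushE P) x' = 0) :
    G.quotWeight P x = 0 := by
  obtain ⟨vx, rfl⟩ := Quot.exists_rep x
  have hvx : Quot.mk (G'.PAdj (γ.pushE P)) (γ.vMap vx) = x' := hφ
  set W : Finset G.V := Finset.univ.filter
    (fun v => Quot.mk (G'.PAdj (γ.pushE P)) (γ.vMap v) = x') with hW
  have hmemW : ∀ v : G.V, v ∈ W ↔ Quot.mk (G'.PAdj (γ.pushE P)) (γ.vMap v) = x' := by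
    intro v; simp [hW]
  set A : Finset G.E := γ.F.filter (fun e => ∀ u ∈ G.ends e, u ∈ W) with hA
  set B : Finset G.E := P.filter (fun e => ∀ u ∈ G.ends e, u ∈ W) with hB
  set T : Finset G.E := A ∪ B with hT
  -- decompose the hypothesis
  unfold LGraph.quotWeight at h0
  have hw0 : ∀ v' ∈ G'.fiberV (γ.pushE P) x', G'.w v' = 0 :=
    Finset.sum_eq_zero_iff.1 (Nat.eq_zero_of_add_eq_zero_right h0)
  have hc' : (G'.fiberE (γ.pushE P) x').card + 1 ≤ (G'.fiberV (γ.pushE P) x').card :=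
    Nat.sub_eq_zero_iff_le.1 (Nat.eq_zero_of_add_eq_zero_left h0)
  -- per-vertex consequences of weight 0 in `G'`
  have hFv : ∀ v' ∈ G'.fiberV (γ.pushE P) x',
      ((γ.F.filter (fun e => ∀ u ∈ G.ends e, γ.vMap u = v')).card + 1 ≤
        (Finset.univ.filter (fun v => γ.vMap v = v')).card) ∧
      (∀ v ∈ Finset.univ.filter (fun v => γ.vMap v = v'), G.w v = 0) := by
    intro v' hv'
    have h := γ.w_compat v'
    rw [hw0 v' hv'] at h
    exact ⟨Nat.sub_eq_zero_iff_le.1 (Nat.eq_zero_of_add_eq_zero_left h.symm),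
      Finset.sum_eq_zero_iff.1 (Nat.eq_zero_of_add_eq_zero_right h.symm)⟩
  -- counting `W`
  have hWcard : W.card = ∑ v' ∈ G'.fiberV (γ.pushE P) x',
      (Finset.univ.filter (fun v => γ.vMap v = v')).card := by
    rw [Finset.card_eq_sum_card_fiberwise (f := γ.vMap) (t := G'.fiberV (γ.pushE P) x')
      (fun v hv => by
        rw [Finset.mem_coe, LGraph.fiberV, Finset.mem_filter]
        exact ⟨Finset.mem_univ _, (hmemW v).1 hv⟩)]
    apply Finset.sum_congr rfl
    intro v' hv'
    congr 1
    ext v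
    simp only [Finset.mem_filter, Finset.mem_univ, true_and]
    constructor
    · rintro ⟨_, h⟩; exact h
    · intro h
      refine ⟨?_, h⟩
      rw [hmemW, h]
      rw [LGraph.fiberV, Finset.mem_filter] at hv'
      exact hv'.2
  -- counting `A`
  have hAcard : A.card = ∑ v' ∈ G'.fiberV (γ.pushE P) x',
      (γ.F.filter (fun e => ∀ u ∈ G.ends e, γ.vMap u = v')).card := by
    rw [Finset.card_eq_sum_card_fiberwise (f := fun e => γ.vMap (G.endPair e).1)
      (t := G'.fiberV (γ.pushE P) x')
      (fun e he => by
        rw [Finset.mem_coe, Finset.mem_filter] at he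
        rw [Finset.mem_coe, LGraph.fiberV, Finset.mem_filter]
        exact ⟨Finset.mem_univ _, (hmemW _).1 (he.2 _ (G.endPair_fst_mem e))⟩)]
    apply Finset.sum_congr rfl
    intro v' hv'
    congr 1
    ext e
    constructor
    · intro he
      rw [Finset.mem_filter] at he
      obtain ⟨heA, hf⟩ := he
      rw [hA, Finset.mem_filter] at heA
      rw [Finset.mem_filter]
      refine ⟨heA.1, fun u hu => ?_⟩
      rw [γ.collapse e heA.1 u hu (G.endPair e).1 (G.endPair_fst_mem e)]
      exact hf
    · intro he
      rw [Finset.mem_filter] at he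
      obtain ⟨heF, hall⟩ := he
      rw [Finset.mem_filter, hA, Finset.mem_filter]
      refine ⟨⟨heF, fun u hu => ?_⟩, hall _ (G.endPair_fst_mem e)⟩
      rw [hmemW, hall u hu]
      rw [LGraph.fiberV, Finset.mem_filter] at hv'
      exact hv'.2
  -- counting `B \ F`
  have hBFcard : (B \ γ.F).card = (G'.fiberE (γ.pushE P) x').card := by
    symm
    apply Finset.card_bij (fun e' _ => ((γ.eEquiv e' : {e : G.E // e ∉ γ.F}) : G.E))
    · intro e' he'
      rw [LGraph.fiberE, Finset.mem_filter] at he'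
      obtain ⟨he'P, hcond⟩ := he'
      rw [Finset.mem_sdiff]
      refine ⟨?_, (γ.eEquiv e').2⟩
      rw [hB, Finset.mem_filter]
      refine ⟨(γ.mem_pushE P).1 he'P, fun u hu => ?_⟩
      rw [hmemW]
      exact hcond _ (by rw [γ.ends_compat]; exact Sym2.mem_map.2 ⟨u, hu, rfl⟩)
    · intro e1 _ e2 _ h
      exact γ.eEquiv.injective (Subtype.ext h)
    · intro e he
      rw [Finset.mem_sdiff] at he
      obtain ⟨heB, heF⟩ := he
      rw [hB, Finset.mem_filter] at heB
      refine ⟨γ.eEquiv.symm ⟨e, heF⟩, ?_, by simp⟩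
      rw [LGraph.fiberE, Finset.mem_filter]
      constructor
      · rw [γ.mem_pushE]; simpa using heB.1
      · intro u' hu'
        rw [γ.ends_compat, Equiv.apply_symm_apply] at hu'
        obtain ⟨u, hu, rfl⟩ := Sym2.mem_map.1 hu'
        exact (hmemW u).1 (heB.2 u hu)
  -- `T` splits as `A ∪ (B \ F)`
  have hTeq : T = A ∪ (B \ γ.F) := by
    rw [hT]
    ext e
    simp only [Finset.mem_union, Finset.mem_sdiff]
    constructor
    · rintro (h | h)
      · exact Or.inl h
      · by_cases hF : e ∈ γ.F
        · exact Or.inl (by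
            rw [hA, Finset.mem_filter]
            exact ⟨hF, (Finset.mem_filter.1 (hB ▸ h)).2⟩)
        · exact Or.inr ⟨h, hF⟩
    · rintro (h | ⟨h, _⟩)
      · exact Or.inl h
      · exact Or.inr h
  have hABdisj : Disjoint A (B \ γ.F) := by
    rw [Finset.disjoint_left]
    intro e heA heBF
    exact (Finset.mem_sdiff.1 heBF).2 (Finset.mem_filter.1 (hA ▸ heA)).1
  have hTcard : T.card = A.card + (B \ γ.F).card := by
    rw [hTeq, Finset.card_union_of_disjoint hABdisj]
  -- the key numerical inequality `|T| + 1 ≤ |W|`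
  have h3 : T.card + 1 ≤ W.card := by
    have hsum : ∑ v' ∈ G'.fiberV (γ.pushE P) x',
        ((γ.F.filter (fun e => ∀ u ∈ G.ends e, γ.vMap u = v')).card + 1) ≤
        ∑ v' ∈ G'.fiberV (γ.pushE P) x',
        (Finset.univ.filter (fun v => γ.vMap v = v')).card :=
      Finset.sum_le_sum (fun v' hv' => (hFv v' hv').1)
    rw [Finset.sum_add_distrib, Finset.sum_const, smul_eq_mul, mul_one, ← hWcard] at hsum
    rw [hTcard, hAcard, hBFcard]
    omega
  -- connectivity of `W` through `T`
  have hC0b : ∀ a c : G.V, Relation.EqvGen (G.PAdj γ.F) a c → a ∈ W →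
      Relation.EqvGen (G.PAdj T) a c := by
    intro a c h
    induction h with
    | rel u v huv =>
        intro hu
        obtain ⟨e, heF, hue, hve⟩ := huv
        refine Relation.EqvGen.rel _ _ ⟨e, ?_, hue, hve⟩
        rw [hT, Finset.mem_union]
        refine Or.inl ?_
        rw [hA, Finset.mem_filter]
        refine ⟨heF, fun w hw => ?_⟩
        rw [hmemW, γ.collapse e heF w hw u hue]
        exact (hmemW u).1 hu
    | refl u => intro _; exact Relation.EqvGen.refl u
    | symm u v h ih =>
        intro hv
        have hu : u ∈ W := by
          rw [hmemW, γ.vmap_eq_of_eqvGenF h]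
          exact (hmemW v).1 hv
        exact (ih hu).symm _ _
    | trans u v w h1 h2 ih1 ih2 =>
        intro hu
        have hv : v ∈ W := by
          rw [hmemW, ← γ.vmap_eq_of_eqvGenF h1]
          exact (hmemW u).1 hu
        exact (ih1 hu).trans _ _ _ (ih2 hv)
  have hC1 : ∀ a' b' : G'.V, Relation.EqvGen (G'.PAdj (γ.pushE P)) a' b' →
      ∀ a b : G.V, γ.vMap a = a' → γ.vMap b = b' →
      Quot.mk (G'.PAdj (γ.pushE P)) a' = x' → Relation.EqvGen (G.PAdj T) a b := by
    intro a' b' h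
    induction h with
    | rel u' v' huv =>
        intro a b ha hb hq
        obtain ⟨e', he'P, hu', hv'⟩ := huv
        have hendsmap : G'.ends e' =
            (G.ends ((γ.eEquiv e' : {e : G.E // e ∉ γ.F}) : G.E)).map γ.vMap :=
          γ.ends_compat e'
        have hqmem : ∀ w' ∈ G'.ends e', Quot.mk (G'.PAdj (γ.pushE P)) w' = x' := by
          intro w' hw'
          exact (Quot.sound ⟨e', he'P, hw', hu'⟩).trans hq
        have hW_ends : ∀ u ∈ G.ends ((γ.eEquiv e' : {e : G.E // e ∉ γ.F}) : G.E), u ∈ W := by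
          intro u hu
          rw [hmemW]
          exact hqmem _ (by rw [hendsmap]; exact Sym2.mem_map.2 ⟨u, hu, rfl⟩)
        have heB : ((γ.eEquiv e' : {e : G.E // e ∉ γ.F}) : G.E) ∈ B := by
          rw [hB, Finset.mem_filter]
          exact ⟨(γ.mem_pushE P).1 he'P, hW_ends⟩
        obtain ⟨ua, hua, huaeq⟩ := Sym2.mem_map.1 (hendsmap ▸ hu')
        obtain ⟨ub, hub, hubeq⟩ := Sym2.mem_map.1 (hendsmap ▸ hv')
        have h1 : Relation.EqvGen (G.PAdj T) a ua :=
          hC0b a ua (γ.fiber_conn a ua (by rw [ha, ← huaeq]))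
            (by rw [hmemW, ha]; exact hq)
        have h2 : Relation.EqvGen (G.PAdj T) ua ub :=
          Relation.EqvGen.rel _ _ ⟨((γ.eEquiv e' : {e : G.E // e ∉ γ.F}) : G.E),
            by rw [hT, Finset.mem_union]; exact Or.inr heB, hua, hub⟩
        have h3' : Relation.EqvGen (G.PAdj T) ub b :=
          hC0b ub b (γ.fiber_conn ub b (by rw [hubeq, hb])) (hW_ends ub hub)
        exact (h1.trans _ _ _ h2).trans _ _ _ h3'
    | refl u' =>
        intro a b ha hb hq
        exact hC0b a b (γ.fiber_conn a b (ha.trans hb.symm)) (by rw [hmemW, ha]; exact hq)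
    | symm u' v' h ih =>
        intro a b ha hb hq
        have hq2 : Quot.mk (G'.PAdj (γ.pushE P)) u' = x' := (Quot.eqvGen_sound h).trans hq
        exact ((ih b a hb ha hq2).symm _ _)
    | trans u' v' w' h1 h2 ih1 ih2 =>
        intro a b ha hb hq
        obtain ⟨c, hc⟩ := γ.vSurj v'
        have hqv : Quot.mk (G'.PAdj (γ.pushE P)) v' = x' :=
          (Quot.eqvGen_sound h1).symm.trans hq
        exact (ih1 a c ha hc hq).trans _ _ _ (ih2 c b hc hb hqv)
  have hconn : ∀ v ∈ W, Relation.EqvGen (G.PAdj T) v vx := by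
    intro v hv
    have h := (hmemW v).1 hv
    exact hC1 (γ.vMap v) (γ.vMap vx) (Quot.eq.1 (h.trans hvx.symm)) v vx rfl rfl h
  -- upper bound on the number of components of `(V, T)`
  have h2' : Fintype.card (G.CompV T) + W.card ≤ Fintype.card G.V + 1 := by
    have hsurj : Function.Surjective (fun o : Option {v : G.V // v ∉ W} =>
        Option.elim o (Quot.mk (G.PAdj T) vx : G.CompV T)
          (fun v => Quot.mk (G.PAdj T) v.1)) := by
      intro y
      obtain ⟨v, rfl⟩ := Quot.exists_rep y
      by_cases hv : v ∈ W
      · exact ⟨none, (Quot.eqvGen_sound (hconn v hv)).symm⟩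
      · exact ⟨some ⟨v, hv⟩, rfl⟩
    have hcard : Fintype.card (G.CompV T) ≤ Fintype.card (Option {v : G.V // v ∉ W}) :=
      Fintype.card_le_of_surjective _ hsurj
    rw [Fintype.card_option, Fintype.card_subtype] at hcard
    have hcompl : Finset.univ.filter (fun v : G.V => v ∉ W) = Wᶜ := by
      ext v; simp
    rw [hcompl, Finset.card_compl] at hcard
    have hle : W.card ≤ Fintype.card G.V := Finset.card_le_univ W
    omega
  -- the subgraph of the component of `vx`
  have hBx : G.fiberE P (Quot.mk (G.PAdj P) vx) ⊆ T := by
    intro e he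
    unfold LGraph.fiberE at he
    rw [Finset.mem_filter] at he
    obtain ⟨heP, hall⟩ := he
    rw [hT, Finset.mem_union]
    refine Or.inr ?_
    rw [hB, Finset.mem_filter]
    refine ⟨heP, fun u hu => ?_⟩
    rw [hmemW]
    have : γ.phi P (Quot.mk (G.PAdj P) u) = x' := by rw [hall u hu]; exact hφ
    exact this
  have hfibsub : ∀ v ∈ G.fiberV P (Quot.mk (G.PAdj P) vx), v ∈ W := by
    intro v hv
    unfold LGraph.fiberV at hv
    rw [Finset.mem_filter] at hv
    rw [hmemW]
    have : γ.phi P (Quot.mk (G.PAdj P) v) = x' := by rw [hv.2]; exact hφ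
    exact this
  have hM := G.card_comp_add_card_mono
    ((T \ G.fiberE P (Quot.mk (G.PAdj P) vx)).card)
    (G.fiberE P (Quot.mk (G.PAdj P) vx)) T hBx rfl
  -- lower bound on the components of the subgraph
  have h6 : Fintype.card G.V + 1 ≤
      Fintype.card (G.CompV (G.fiberE P (Quot.mk (G.PAdj P) vx))) +
      (G.fiberV P (Quot.mk (G.PAdj P) vx)).card := by
    have hUS : ∀ e ∈ G.fiberE P (Quot.mk (G.PAdj P) vx),
        ∀ u ∈ G.ends e, u ∈ G.fiberV P (Quot.mk (G.PAdj P) vx) := by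
      intro e he u hu
      unfold LGraph.fiberV
      rw [Finset.mem_filter]
      exact ⟨Finset.mem_univ u, (Finset.mem_filter.1 he).2 u hu⟩
    have hvxU : vx ∈ G.fiberV P (Quot.mk (G.PAdj P) vx) := by
      unfold LGraph.fiberV
      rw [Finset.mem_filter]
      exact ⟨Finset.mem_univ vx, rfl⟩
    have hinj : Function.Injective
        (fun o : Option {v : G.V // v ∉ G.fiberV P (Quot.mk (G.PAdj P) vx)} =>
        Option.elim o
          (Quot.mk (G.PAdj (G.fiberE P (Quot.mk (G.PAdj P) vx))) vx :
            G.CompV (G.fiberE P (Quot.mk (G.PAdj P) vx)))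
          (fun v => Quot.mk (G.PAdj (G.fiberE P (Quot.mk (G.PAdj P) vx))) v.1)) := by
      intro o1 o2 h
      cases o1 with
      | none =>
          cases o2 with
          | none => rfl
          | some v =>
              exfalso
              replace h : Quot.mk (G.PAdj (G.fiberE P (Quot.mk (G.PAdj P) vx))) vx =
                Quot.mk (G.PAdj (G.fiberE P (Quot.mk (G.PAdj P) vx))) v.1 := h
              have hh := (G.eqvGen_out hUS (Quot.eq.1 h)).2 v.2
              exact v.2 (hh ▸ hvxU)
      | some v =>
          cases o2 with
          | none =>
              exfalso
              replace h : Quot.mk (G.PAdj (G.fiberE P (Quot.mk (G.PAdj P) vx))) v.1 =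
                Quot.mk (G.PAdj (G.fiberE P (Quot.mk (G.PAdj P) vx))) vx := h
              have hh := (G.eqvGen_out hUS (Quot.eq.1 h)).1 v.2
              exact v.2 (hh.symm ▸ hvxU)
          | some u =>
              replace h : Quot.mk (G.PAdj (G.fiberE P (Quot.mk (G.PAdj P) vx))) v.1 =
                Quot.mk (G.PAdj (G.fiberE P (Quot.mk (G.PAdj P) vx))) u.1 := h
              have hh := (G.eqvGen_out hUS (Quot.eq.1 h)).1 v.2
              exact congrArg some (Subtype.ext hh)
    have hcard : Fintype.card (Option {v : G.V // v ∉ G.fiberV P (Quot.mk (G.PAdj P) vx)}) ≤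
        Fintype.card (G.CompV (G.fiberE P (Quot.mk (G.PAdj P) vx))) :=
      Fintype.card_le_of_injective _ hinj
    rw [Fintype.card_option, Fintype.card_subtype] at hcard
    have hcompl : Finset.univ.filter
        (fun v : G.V => v ∉ G.fiberV P (Quot.mk (G.PAdj P) vx)) =
        (G.fiberV P (Quot.mk (G.PAdj P) vx))ᶜ := by
      ext v; simp
    rw [hcompl, Finset.card_compl] at hcard
    have hle : (G.fiberV P (Quot.mk (G.PAdj P) vx)).card ≤ Fintype.card G.V :=
      Finset.card_le_univ _
    omega
  -- weights vanish on the component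
  have hwzero : ∀ v ∈ G.fiberV P (Quot.mk (G.PAdj P) vx), G.w v = 0 := by
    intro v hv
    have hvW : v ∈ W := hfibsub v hv
    have hv' : γ.vMap v ∈ G'.fiberV (γ.pushE P) x' := by
      rw [LGraph.fiberV, Finset.mem_filter]
      exact ⟨Finset.mem_univ _, (hmemW v).1 hvW⟩
    exact (hFv (γ.vMap v) hv').2 v
      (by rw [Finset.mem_filter]; exact ⟨Finset.mem_univ v, rfl⟩)
  unfold LGraph.quotWeight
  rw [Finset.sum_eq_zero hwzero, Nat.zero_add, Nat.sub_eq_zero_iff_le]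
  omega

end Contraction

/-- Let `γ : G → G'` be a contraction and `(P,s)` a spin
structure on `G`.  Then `(P', s') = γ_*(P,s)` (where `P' = γ_* P` and
`s'(v') = Σ_{v ∈ γ̄⁻¹(v')} s(v)`) is a spin structure on `G'` — in particular
`P'` is cyclic and `s'` vanishes on weight-`0` vertices of `G'/P'` — and it
has the same parity as `(P,s)`. -/
theorem spin_pushforward_is_spin_and_preserves_parity (G G' : LGraph)
    (γ : Contraction G G') (P : Finset G.E) (hP : G.IsCyclic P)
    (s : G.CompV P → ZMod 2)
    (hs : ∀ x, G.quotWeight P x = 0 → s x = 0) :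
    G'.IsCyclic (γ.pushE P) ∧
    (∀ x' : G'.CompV (γ.pushE P),
      G'.quotWeight (γ.pushE P) x' = 0 → γ.pushS P s x' = 0) ∧
    (∑ x' : G'.CompV (γ.pushE P), γ.pushS P s x') = ∑ x : G.CompV P, s x := by
  refine ⟨γ.isCyclic_pushE P hP, ?_, γ.sum_pushS P s⟩
  intro x' hx'
  unfold Contraction.pushS
  apply Finset.sum_eq_zero
  intro x hx
  rw [Finset.mem_filter] at hx
  exact hs x (γ.quotWeight_eq_zero_of_push P ((γ.compMapsTo_iff P x x').1 hx.2) hx')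

end
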